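/- A finite simple graph G is a permutation graph if and only if G admits a cohesive order, i.e., a labeling of its vertex set by [n] = {1,...,n} such that (i) if i < j < k and {i,j} ∈ E(G) and {j,k} ∈ E(G), then {i,k} ∈ E(G), and (ii) if i < j < k and {i,k} ∈ E(G), then {i,j} ∈ E(G) or {j,k} ∈ E(G). -/

import Mathlib

open MvPolynomial
open scoped Classical
set_option synthInstance.maxHeartbeats 1000000
set_option maxHeartbeats 1000000
set_option linter.unusedVariables false

/-- The permutation graph `G(σ)` of a permutation `σ` of `Fin n`:
`i` and `j` with `i < j` are adjacent iff `j` appears before `i` in the list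
`σ 1, …, σ n`. -/
def permGraph {n : ℕ} (σ : Equiv.Perm (Fin n)) : SimpleGraph (Fin n) where
  Adj i j := (i < j ∧ σ.symm j < σ.symm i) ∨ (j < i ∧ σ.symm i < σ.symm j)
  symm := ⟨fun i j h => Or.symm h⟩
  loopless := ⟨fun i h => by rcases h with ⟨h, -⟩ | ⟨h, -⟩ <;> exact absurd h (lt_irrefl i)⟩

lemma cohesive_to_perm {n : ℕ} (A : Fin n → Fin n → Prop)
    (hsymm : ∀ i j, A i j → A j i) (hirr : ∀ i, ¬ A i i)
    (h1 : ∀ i j k : Fin n, i < j → j < k → A i j → A j k → A i k)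
    (h2 : ∀ i j k : Fin n, i < j → j < k → A i k → A i j ∨ A j k) :
    ∃ σ : Equiv.Perm (Fin n), ∀ i j, A i j ↔ (permGraph σ).Adj i j := by
  set r : Fin n → Fin n → Prop := fun i j => (i < j ∧ ¬ A i j) ∨ (j < i ∧ A i j) with hr
  haveI : IsTrichotomous (Fin n) r := by
    constructor
    intro a b
    rcases lt_trichotomy a b with h | h | h
    · by_cases hA : A a b
      · exact fun _ hba => (hba (Or.inr ⟨h, hsymm _ _ hA⟩)).elim
      · exact fun hab _ => (hab (Or.inl ⟨h, hA⟩)).elim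
    · exact fun _ _ => h
    · by_cases hA : A a b
      · exact fun hab _ => (hab (Or.inr ⟨h, hA⟩)).elim
      · exact fun _ hba => (hba (Or.inl ⟨h, fun hba => hA (hsymm _ _ hba)⟩)).elim
  haveI : IsIrrefl (Fin n) r := by
    constructor
    rintro a (⟨h, -⟩ | ⟨h, -⟩) <;> exact absurd h (lt_irrefl a)
  haveI : IsTrans (Fin n) r := by
    constructor
    rintro a b c (⟨hab, hnA⟩ | ⟨hba, hA⟩) (⟨hbc, hnB⟩ | ⟨hcb, hB⟩)
    · exact Or.inl ⟨lt_trans hab hbc, fun h => (h2 a b c hab hbc h).elim hnA hnB⟩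
    · rcases lt_trichotomy a c with h | h | h
      · exact Or.inl ⟨h, fun hac => hnA (h1 a c b h hcb hac (hsymm _ _ hB))⟩
      · exact absurd (hsymm _ _ (h ▸ hB)) hnA
      · refine Or.inr ⟨h, ?_⟩
        rcases h2 c a b h hab (hsymm _ _ hB) with hca | hab'
        · exact hsymm _ _ hca
        · exact absurd hab' hnA
    · rcases lt_trichotomy a c with h | h | h
      · exact Or.inl ⟨h, fun hac => hnB (h1 b a c hba h (hsymm _ _ hA) hac)⟩
      · exact absurd (hsymm _ _ (h ▸ hA)) hnB
      · refine Or.inr ⟨h, ?_⟩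
        rcases h2 b c a hbc h (hsymm _ _ hA) with hbc' | hca
        · exact absurd hbc' hnB
        · exact hsymm _ _ hca
    · exact Or.inr ⟨lt_trans hcb hba,
        hsymm _ _ (h1 c b a hcb hba (hsymm _ _ hB) (hsymm _ _ hA))⟩
  haveI : IsStrictOrder (Fin n) r := ⟨⟩
  haveI : IsStrictTotalOrder (Fin n) r := ⟨⟩
  letI : DecidableRel r := fun a b => Classical.propDecidable _
  let g := @monoEquivOfFin (Fin n) _ (linearOrderOfSTO r) n (Fintype.card_fin n)
  let σ : Equiv.Perm (Fin n) := g.toEquiv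
  have hg : ∀ a b : Fin n, a < b ↔ r (g a) (g b) := by
    intro a b
    exact (@OrderIso.lt_iff_lt (Fin n) (Fin n) _ (linearOrderOfSTO r).toPreorder g a b).symm
  have hkey : ∃ τ : Equiv.Perm (Fin n), ∀ i j : Fin n, τ.symm j < τ.symm i ↔ r j i := by
    refine ⟨σ, fun i j => ?_⟩
    have h := hg (σ.symm j) (σ.symm i)
    have hgi : g (σ.symm i) = i := g.toEquiv.apply_symm_apply i
    have hgj : g (σ.symm j) = j := g.toEquiv.apply_symm_apply j
    rw [hgi, hgj] at h
    exact h
  clear_value σ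
  obtain ⟨τ, key⟩ := hkey
  refine ⟨τ, fun i j => ?_⟩
  show A i j ↔ (i < j ∧ τ.symm j < τ.symm i) ∨ (j < i ∧ τ.symm i < τ.symm j)
  rw [key, key]
  constructor
  · intro hA
    rcases lt_trichotomy i j with h | h | h
    · exact Or.inl ⟨h, Or.inr ⟨h, hsymm _ _ hA⟩⟩
    · exact absurd (h ▸ hA) (hirr j)
    · exact Or.inr ⟨h, Or.inr ⟨h, hA⟩⟩
  · rintro (⟨hij, ⟨hji, -⟩ | ⟨-, hAji⟩⟩ | ⟨hji, ⟨hij', -⟩ | ⟨-, hAij⟩⟩)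
    · exact absurd hij (lt_asymm hji)
    · exact hsymm _ _ hAji
    · exact absurd hij' (lt_asymm hji)
    · exact hAij


/-- A finite simple graph is a permutation graph if it is isomorphic to `G(σ)` for some
permutation `σ`. -/
def IsPermutationGraph {V : Type*} (G : SimpleGraph V) [Fintype V] : Prop :=
  ∃ σ : Equiv.Perm (Fin (Fintype.card V)), Nonempty (G ≃g permGraph σ)

/-- A graph has a cohesive order if its vertex set can be labeled by `[n]` so that:
(i) if `i < j < k` and `{i,j}, {j,k} ∈ E(G)` then `{i,k} ∈ E(G)`, and
(ii) if `i < j < k` and `{i,k} ∈ E(G)` then `{i,j} ∈ E(G)` or `{j,k} ∈ E(G)`. -/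
def HasCohesiveOrder {V : Type*} (G : SimpleGraph V) [Fintype V] : Prop :=
  ∃ e : V ≃ Fin (Fintype.card V),
    (∀ i j k : Fin (Fintype.card V), i < j → j < k →
      G.Adj (e.symm i) (e.symm j) → G.Adj (e.symm j) (e.symm k) →
        G.Adj (e.symm i) (e.symm k)) ∧
    (∀ i j k : Fin (Fintype.card V), i < j → j < k →
      G.Adj (e.symm i) (e.symm k) →
        (G.Adj (e.symm i) (e.symm j) ∨ G.Adj (e.symm j) (e.symm k)))

/-- A finite simple graph is a permutation graph if and only if it has a cohesive
order. -/
theorem isPermutationGraph_iff_hasCohesiveOrder {V : Type*} [Fintype V]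
    (G : SimpleGraph V) :
    IsPermutationGraph G ↔ HasCohesiveOrder G := by
  constructor
  · rintro ⟨σ, ⟨φ⟩⟩
    have key : ∀ a b : Fin (Fintype.card V),
        G.Adj (φ.toEquiv.symm a) (φ.toEquiv.symm b) ↔ (permGraph σ).Adj a b := by
      intro a b
      have h := φ.map_adj_iff (v := φ.toEquiv.symm a) (w := φ.toEquiv.symm b)
      have ha : φ (φ.toEquiv.symm a) = a := φ.toEquiv.apply_symm_apply a
      have hb : φ (φ.toEquiv.symm b) = b := φ.toEquiv.apply_symm_apply b
      rw [ha, hb] at h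
      exact h.symm
    refine ⟨φ.toEquiv, fun i j k hij hjk ha hb => ?_, fun i j k hij hjk ha => ?_⟩
    · rw [key] at ha hb ⊢
      rcases ha with ⟨-, ha⟩ | ⟨h, -⟩
      · rcases hb with ⟨-, hb⟩ | ⟨h, -⟩
        · exact Or.inl ⟨lt_trans hij hjk, lt_trans hb ha⟩
        · exact absurd hjk (lt_asymm h)
      · exact absurd hij (lt_asymm h)
    · rw [key] at ha ⊢
      rw [key]
      rcases ha with ⟨-, ha⟩ | ⟨h, -⟩
      · rcases lt_or_ge (σ.symm j) (σ.symm i) with h' | h'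
        · exact Or.inl (Or.inl ⟨hij, h'⟩)
        · exact Or.inr (Or.inl ⟨hjk, lt_of_lt_of_le ha h'⟩)
      · exact absurd (lt_trans hij hjk) (lt_asymm h)
  · rintro ⟨e, hc1, hc2⟩
    obtain ⟨σ, hσ⟩ := cohesive_to_perm (fun i j => G.Adj (e.symm i) (e.symm j))
      (fun i j h => h.symm) (fun i h => G.loopless.irrefl _ h) hc1 hc2
    refine ⟨σ, ⟨⟨e, ?_⟩⟩⟩
    intro a b
    have h := hσ (e a) (e b)
    simpa using h.symm
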